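/- The ordering on finite strictly increasing sequences of ordinals defined by σ < τ iff either τ = τ₀‿σ for some nonempty sequence τ₀ (τ is σ with a prefix prepended), or τ = τ₀‿⟨ν'⟩‿σ₁ and σ = σ₀‿⟨ν⟩‿σ₁ with ν < ν' (they share a common terminal segment σ₁ and the entries immediately before it satisfy ν < ν'), is a strict linear order on the set of finite strictly increasing sequences of ordinals. -/

import Mathlib

/-- The ordering on finite sequences of ordinals: `σ < τ` iff `τ = τ₀ ++ σ` for some
nonempty `τ₀` (i.e. `τ` is `σ` with a nonempty prefix prepended), or `σ` and `τ` share a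
common terminal segment `σ₁` and the entries immediately preceding it satisfy `ν < ν'`. -/
def SeqLT (σ τ : List Ordinal) : Prop :=
  (∃ τ₀ : List Ordinal, τ₀ ≠ [] ∧ τ = τ₀ ++ σ) ∨
  (∃ (σ₀ τ₀ σ₁ : List Ordinal) (ν ν' : Ordinal), ν < ν' ∧
      σ = σ₀ ++ ν :: σ₁ ∧ τ = τ₀ ++ ν' :: σ₁)

private lemma lex_destruct {α : Type*} {r : α → α → Prop} :
    ∀ {d e : List α}, List.Lex r d e →
      (∃ e₀, e₀ ≠ [] ∧ e = d ++ e₀) ∨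
      (∃ (p d' e' : List α) (a b : α), r a b ∧ d = p ++ a :: d' ∧ e = p ++ b :: e') := by
  intro d e h
  induction h with
  | nil => exact Or.inl ⟨_, List.cons_ne_nil _ _, rfl⟩
  | @cons a l₁ l₂ h ih =>
    rcases ih with ⟨e₀, hne, rfl⟩ | ⟨p, d', e', x, y, hxy, rfl, rfl⟩
    · exact Or.inl ⟨e₀, hne, rfl⟩
    · exact Or.inr ⟨a :: p, d', e', x, y, hxy, rfl, rfl⟩
  | rel h =>
    exact Or.inr ⟨[], _, _, _, _, h, rfl, rfl⟩

private lemma seqLT_iff_lex (σ τ : List Ordinal) :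
    SeqLT σ τ ↔ List.Lex (· < ·) σ.reverse τ.reverse := by
  constructor
  · rintro (⟨τ₀, hne, rfl⟩ | ⟨σ₀, τ₀, σ₁, ν, ν', hlt, rfl, rfl⟩)
    · rw [List.reverse_append]
      have hne' : τ₀.reverse ≠ [] := by simpa using hne
      clear hne
      induction σ.reverse with
      | nil =>
        obtain ⟨a, l, hl⟩ := List.exists_cons_of_ne_nil hne'
        rw [hl]; exact List.Lex.nil
      | cons a l ih => exact List.Lex.cons ih
    · simp only [List.reverse_append, List.reverse_cons, List.append_assoc]
      induction σ₁.reverse with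
      | nil => exact List.Lex.rel hlt
      | cons a l ih => exact List.Lex.cons ih
  · intro h
    rcases lex_destruct h with ⟨e₀, hne, he⟩ | ⟨p, d', e', a, b, hab, hd, he⟩
    · refine Or.inl ⟨e₀.reverse, by simpa using hne, ?_⟩
      have := congrArg List.reverse he
      simpa using this
    · refine Or.inr ⟨d'.reverse, e'.reverse, p.reverse, a, b, hab, ?_, ?_⟩
      · have := congrArg List.reverse hd; simpa using this
      · have := congrArg List.reverse he; simpa using this

/-- `SeqLT` is a strict linear order on the set of finite strictly increasing sequences of
ordinals: it is irreflexive, transitive, and trichotomous. -/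
theorem seqLT_isStrictLinearOrder :
    (∀ σ : {l : List Ordinal // l.Chain' (· < ·)}, ¬ SeqLT σ.1 σ.1) ∧
    (∀ σ τ ρ : {l : List Ordinal // l.Chain' (· < ·)},
        SeqLT σ.1 τ.1 → SeqLT τ.1 ρ.1 → SeqLT σ.1 ρ.1) ∧
    (∀ σ τ : {l : List Ordinal // l.Chain' (· < ·)},
        SeqLT σ.1 τ.1 ∨ σ = τ ∨ SeqLT τ.1 σ.1) := by
  refine ⟨fun σ h => ?_, fun σ τ ρ h₁ h₂ => ?_, fun σ τ => ?_⟩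
  · rw [seqLT_iff_lex] at h
    exact irrefl _ h
  · rw [seqLT_iff_lex] at h₁ h₂ ⊢
    exact List.lex_trans (fun h₁ h₂ => lt_trans h₁ h₂) h₁ h₂
  · rcases trichotomous_of (List.Lex (· < ·)) σ.1.reverse τ.1.reverse with h | h | h
    · exact Or.inl ((seqLT_iff_lex _ _).2 h)
    · exact Or.inr (Or.inl (Subtype.ext (List.reverse_injective h)))
    · exact Or.inr (Or.inr ((seqLT_iff_lex _ _).2 h))
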